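/- Let g be a Lie algebra, 0 → M → M' →^π M'' → 0 a short exact sequence of g-modules, and 0 → M'' → e → g → 0 an abelian extension of Lie algebras with e = M'' ⊕ g as a vector space and bracket [(m₁,x₁),(m₂,x₂)] = ([x₁,m₂] - [x₂,m₁] + φ(x₁,x₂), [x₁,x₂]) for a 2-cocycle φ. Define μ : M' → e by μ(m') = (π(m'), 0), and let e act on M' by [(m'',x), m'] := [x, m']. Then (M', e, μ) is a crossed module over a Lie algebra: μ is an e-module map and [μ(v), w] = -[μ(w), v] for all v, w ∈ M'. -/
import Mathlib


/-- given a short exact sequence `0 → M → M' →^π M'' → 0` of `g`-modules and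
an abelian extension `e = M'' ⊕ g` of `g` by `M''` determined by a `2`-cocycle `φ`, the pair
`(M', e, μ)` with `μ(m') = (π(m'), 0)` and the `e`-action `[(m'', x), m'] = [x, m']` is a
crossed module over a Lie algebra. -/
theorem crossed_ext_stmt10 {K g M M' M'' : Type} [Field K] [LieRing g] [LieAlgebra K g]
    [AddCommGroup M] [Module K M] [LieRingModule g M] [LieModule K g M]
    [AddCommGroup M'] [Module K M'] [LieRingModule g M'] [LieModule K g M']
    [AddCommGroup M''] [Module K M''] [LieRingModule g M''] [LieModule K g M'']
    -- the short exact sequence 0 → M → M' → M'' → 0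
    (ι : M →ₗ⁅K,g⁆ M') (π : M' →ₗ⁅K,g⁆ M'')
    (hι : Function.Injective ι) (hπ : Function.Surjective π)
    (hexact : LinearMap.range (ι : M →ₗ[K] M') = LinearMap.ker (π : M' →ₗ[K] M''))
    -- a 2-cocycle φ on g with values in M''
    (φ : g →ₗ[K] g →ₗ[K] M'') (hφalt : ∀ x : g, φ x x = 0)
    (hφcocycle : ∀ x y z : g,
      ⁅x, φ y z⁆ - ⁅y, φ x z⁆ + ⁅z, φ x y⁆ - φ ⁅x, y⁆ z + φ ⁅x, z⁆ y - φ ⁅y, z⁆ x = 0) :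
    -- the bracket of the abelian extension e = M'' ⊕ g,
    let br : (M'' × g) → (M'' × g) → (M'' × g) := fun p q =>
      (⁅p.2, q.1⁆ - ⁅q.2, p.1⁆ + φ p.2 q.2, ⁅p.2, q.2⁆)
    -- the action of e on M',
    let act : (M'' × g) → M' → M' := fun p m' => ⁅p.2, m'⁆
    -- and the map μ : M' → e.
    let μ : M' → (M'' × g) := fun m' => (π m', 0)
    -- Then `act` is an action of the Lie algebra e on M',
    (∀ p q : M'' × g, ∀ m' : M', act (br p q) m' = act p (act q m') - act q (act p m')) ∧
    -- μ is a map of e-modules,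
    (∀ (p : M'' × g) (m' : M'), μ (act p m') = br p (μ m')) ∧
    -- and the crossed module condition [μ v, w] = -[μ w, v] holds.
    (∀ v w : M', act (μ v) w = - act (μ w) v) := by
  refine ⟨fun p q m' => ?_, fun p m' => ?_, fun v w => by simp⟩
  · simp [lie_lie]
  · ext <;> simp
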